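/- Let K be a totally real number field of degree g over ℚ with real embeddings σ₁,…,σ_g, and let I, J ⊆ {1,…,g} be disjoint subsets. Then there exist elements η, β in the ring of integers O_K such that: (1) σ_k(η) < 0 for k ∈ I and σ_k(η) > 0 for k ∉ I; (2) σ_k(β) < 0 for k ∈ J and σ_k(β) > 0 for k ∉ J; and (3) σ_k(η) + σ_k(β) < 0 for all k ∈ I ∪ J. -/

import Mathlib

open NumberField

section aux

variable {K : Type*} [Field K] [NumberField K] {g : ℕ}

/-- The embedding map as a ℚ-linear map into `Fin g → ℝ`. -/
noncomputable def embMap (σ : Fin g → (K →+* ℝ)) : K →ₗ[ℚ] (Fin g → ℝ) where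
  toFun x := fun k => σ k x
  map_add' x y := by ext k; simp
  map_smul' q x := by
    ext k
    simp [Rat.smul_def, map_mul, map_ratCast]

theorem dense_embMap (σ : Fin g → (K →+* ℝ)) (hσ : Function.Injective σ) :
    Dense (Set.range (embMap σ) : Set (Fin g → ℝ)) := by
  classical
  set A : Submodule ℚ (Fin g → ℝ) := LinearMap.range (embMap σ) with hA
  have hAA : (Set.range (embMap σ) : Set (Fin g → ℝ)) = (A : Set (Fin g → ℝ)) :=
    (LinearMap.coe_range _).symm
  rw [hAA]
  -- closure is closed under real scalar multiplication
  have key : ∀ r : ℝ, ∀ x ∈ closure (A : Set (Fin g → ℝ)), r • x ∈ closure (A : Set (Fin g → ℝ)) := by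
    have step1 : ∀ x ∈ (A : Set (Fin g → ℝ)), ∀ r : ℝ, r • x ∈ closure (A : Set (Fin g → ℝ)) := by
      intro x hx r
      have hcl : IsClosed {r : ℝ | r • x ∈ closure (A : Set (Fin g → ℝ))} :=
        isClosed_closure.preimage (by fun_prop)
      have hsub : Set.range ((↑) : ℚ → ℝ) ⊆ {r : ℝ | r • x ∈ closure (A : Set (Fin g → ℝ))} := by
        rintro _ ⟨q, rfl⟩
        have : (q : ℝ) • x = q • x := by
          funext k; simp [Rat.smul_def]
        simpa [Set.mem_setOf_eq, this] using subset_closure (A.smul_mem q hx)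
      have hdr : Dense {r : ℝ | r • x ∈ closure (A : Set (Fin g → ℝ))} :=
        (Rat.denseRange_cast (𝕜 := ℝ)).mono hsub
      have : {r : ℝ | r • x ∈ closure (A : Set (Fin g → ℝ))} = Set.univ := by
        rw [← hcl.closure_eq, hdr.closure_eq]
      exact Set.eq_univ_iff_forall.mp this r
    intro r x hx
    have hcl2 : IsClosed {x : Fin g → ℝ | r • x ∈ closure (A : Set (Fin g → ℝ))} :=
      isClosed_closure.preimage (continuous_const_smul r)
    exact closure_minimal (fun y hy => step1 y hy r) hcl2 hx
  -- the closure as a real submodule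
  set W : Submodule ℝ (Fin g → ℝ) :=
    { carrier := closure (A : Set (Fin g → ℝ))
      add_mem' := fun ha hb => by
        have := A.toAddSubmonoid.topologicalClosure.add_mem
          (by simpa [AddSubmonoid.topologicalClosure] using ha)
          (by simpa [AddSubmonoid.topologicalClosure] using hb)
        simpa [AddSubmonoid.topologicalClosure] using this
      zero_mem' := subset_closure A.zero_mem
      smul_mem' := fun r x hx => key r x hx } with hW
  -- linear independence of the characters
  have hli : LinearIndependent ℝ (fun k : Fin g => ⇑(σ k) : Fin g → (K → ℝ)) := by
    have h1 := linearIndependent_monoidHom K ℝ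
    have h2 : Function.Injective (fun k : Fin g => ((σ k : K →* ℝ) : K →* ℝ)) := by
      intro j k hj
      apply hσ
      ext x
      exact DFunLike.congr_fun hj x
    exact h1.comp _ h2
  -- W = ⊤
  have hWtop : W = ⊤ := by
    by_contra hne
    obtain ⟨f, hf0, hfbot⟩ :=
      Submodule.exists_dual_map_eq_bot_of_lt_top (lt_top_iff_ne_top.mpr hne)
        (inferInstance)
    have hvanish : ∀ w ∈ W, f w = 0 := by
      intro w hw
      have : f w ∈ W.map f := Submodule.mem_map_of_mem hw
      rwa [hfbot, Submodule.mem_bot] at this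
    set c : Fin g → ℝ := fun k => f (fun j => if k = j then 1 else 0) with hc
    have hrep : ∀ x : Fin g → ℝ, f x = ∑ k, x k * c k := by
      intro x
      have := LinearMap.pi_apply_eq_sum_univ f x
      simpa [hc, smul_eq_mul] using this
    have hsum : ∑ k, c k • (⇑(σ k) : K → ℝ) = 0 := by
      funext x
      have hx : (embMap σ x) ∈ W := subset_closure ⟨x, rfl⟩
      have := hvanish _ hx
      rw [hrep] at this
      simpa [embMap, Finset.sum_apply, mul_comm] using this
    have hc0 : ∀ k, c k = 0 := by
      have := Fintype.linearIndependent_iff.mp hli c hsum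
      exact this
    apply hf0
    ext x
    simp [hrep, hc0]
  -- conclude density
  have : closure (A : Set (Fin g → ℝ)) = Set.univ := by
    have : (W : Set (Fin g → ℝ)) = Set.univ := by rw [hWtop]; rfl
    simpa [hW] using this
  rw [dense_iff_closure_eq, this]

end aux

theorem stmt0 (K : Type*) [Field K] [NumberField K] (g : ℕ)
    (hdeg : Module.finrank ℚ K = g)
    (σ : Fin g → (K →+* ℝ)) (hσ : Function.Bijective σ)
    (I J : Finset (Fin g)) (hIJ : Disjoint I J) :
    ∃ η β : 𝓞 K,
      (∀ k, k ∈ I → σ k (η : K) < 0) ∧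
      (∀ k, k ∉ I → 0 < σ k (η : K)) ∧
      (∀ k, k ∈ J → σ k (β : K) < 0) ∧
      (∀ k, k ∉ J → 0 < σ k (β : K)) ∧
      (∀ k, k ∈ I ∪ J → σ k (η : K) + σ k (β : K) < 0) := by
  classical
  have hdense := dense_embMap σ hσ.injective
  -- targets
  set u : Fin g → ℝ := fun k => if k ∈ I then -2 else 1 with hu
  set v : Fin g → ℝ := fun k => if k ∈ J then -2 else 1 with hv
  -- approximate
  have happrox : ∀ w : Fin g → ℝ, ∃ x : K, ∀ k, |σ k x - w k| < 1/2 := by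
    intro w
    obtain ⟨a, haball, hamem⟩ := Metric.dense_iff.mp hdense w (1/2) (by norm_num)
    obtain ⟨x, rfl⟩ := hamem
    refine ⟨x, fun k => ?_⟩
    have := (dist_pi_lt_iff (by norm_num)).mp (Metric.mem_ball.mp haball)
    simpa [embMap, Real.dist_eq] using this k
  obtain ⟨x, hx⟩ := happrox u
  obtain ⟨y, hy⟩ := happrox v
  -- clear denominators
  have halg : ∀ z : K, IsAlgebraic ℤ z := fun z =>
    (IsFractionRing.isAlgebraic_iff ℤ ℚ K).mpr (Algebra.IsAlgebraic.isAlgebraic z)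
  obtain ⟨t₁, n₁, hn₁, ht₁⟩ : ∃ t : integralClosure ℤ K, ∃ n : ℤ, n ≠ 0 ∧
      algebraMap ℤ K n * x = t := by
    obtain ⟨n, hn, hi⟩ := (halg x).exists_integral_multiple
    exact ⟨⟨_, hi⟩, n, hn, by simp [Algebra.smul_def]⟩
  obtain ⟨t₂, n₂, hn₂, ht₂⟩ : ∃ t : integralClosure ℤ K, ∃ n : ℤ, n ≠ 0 ∧
      algebraMap ℤ K n * y = t := by
    obtain ⟨n, hn, hi⟩ := (halg y).exists_integral_multiple
    exact ⟨⟨_, hi⟩, n, hn, by simp [Algebra.smul_def]⟩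
  set m : ℤ := (n₁ * n₂)^2 with hm
  have hmpos : (0 : ℝ) < (m : ℝ) := by
    have : m > 0 := by positivity
    exact_mod_cast this
  have hint1 : IsIntegral ℤ ((m : K) * x) := by
    have heq : (m : K) * x = ((n₁ * n₂^2 : ℤ) : K) * (algebraMap ℤ K n₁ * x) := by
      rw [ht₁]
      rw [← ht₁]
      simp only [algebraMap_int_eq, eq_intCast, hm]
      push_cast
      ring
    rw [heq, ht₁]
    exact (isIntegral_algebraMap (x := (n₁ * n₂^2 : ℤ))).mul t₁.2
  have hint2 : IsIntegral ℤ ((m : K) * y) := by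
    have heq : (m : K) * y = ((n₂ * n₁^2 : ℤ) : K) * (algebraMap ℤ K n₂ * y) := by
      rw [ht₂, ← ht₂]
      simp only [algebraMap_int_eq, eq_intCast, hm]
      push_cast
      ring
    rw [heq, ht₂]
    exact (isIntegral_algebraMap (x := (n₂ * n₁^2 : ℤ))).mul t₂.2
  have hσx : ∀ k, σ k (((⟨(m : K) * x, hint1⟩ : 𝓞 K) : K)) = (m : ℝ) * σ k x := by
    intro k
    rw [RingOfIntegers.coe_mk, map_mul, map_intCast]
    exact hint1
  have hσy : ∀ k, σ k (((⟨(m : K) * y, hint2⟩ : 𝓞 K) : K)) = (m : ℝ) * σ k y := by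
    intro k
    rw [RingOfIntegers.coe_mk, map_mul, map_intCast]
    exact hint2
  refine ⟨⟨(m : K) * x, hint1⟩, ⟨(m : K) * y, hint2⟩, ?_, ?_, ?_, ?_, ?_⟩
  · intro k hk
    show σ k ((m : K) * x) < 0
    rw [map_mul, map_intCast]
    have h1 : σ k x < -(3/2) := by
      have := abs_sub_lt_iff.mp (hx k)
      simp only [hu, if_pos hk] at this
      linarith [this.1]
    exact mul_neg_of_pos_of_neg hmpos (by linarith)
  · intro k hk
    show 0 < σ k ((m : K) * x)
    rw [map_mul, map_intCast]
    have h1 : (1/2 : ℝ) < σ k x := by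
      have := abs_sub_lt_iff.mp (hx k)
      simp only [hu, if_neg hk] at this
      linarith [this.2]
    exact mul_pos hmpos (by linarith)
  · intro k hk
    show σ k ((m : K) * y) < 0
    rw [map_mul, map_intCast]
    have h1 : σ k y < -(3/2) := by
      have := abs_sub_lt_iff.mp (hy k)
      simp only [hv, if_pos hk] at this
      linarith [this.1]
    exact mul_neg_of_pos_of_neg hmpos (by linarith)
  · intro k hk
    show 0 < σ k ((m : K) * y)
    rw [map_mul, map_intCast]
    have h1 : (1/2 : ℝ) < σ k y := by
      have := abs_sub_lt_iff.mp (hy k)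
      simp only [hv, if_neg hk] at this
      linarith [this.2]
    exact mul_pos hmpos (by linarith)
  · intro k hk
    show σ k ((m : K) * x) + σ k ((m : K) * y) < 0
    rw [map_mul, map_mul, map_intCast]
    have hxk := abs_sub_lt_iff.mp (hx k)
    have hyk := abs_sub_lt_iff.mp (hy k)
    have hsum : σ k x + σ k y < 0 := by
      rcases Finset.mem_union.mp hk with h | h
      · have hnJ : k ∉ J := fun hJ => (Finset.disjoint_left.mp hIJ h) hJ
        simp only [hu, if_pos h] at hxk
        simp only [hv, if_neg hnJ] at hyk
        linarith [hxk.1, hyk.1]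
      · have hnI : k ∉ I := fun hI => (Finset.disjoint_left.mp hIJ hI) h
        simp only [hu, if_neg hnI] at hxk
        simp only [hv, if_pos h] at hyk
        linarith [hxk.1, hyk.1]
    calc (m : ℝ) * σ k x + (m : ℝ) * σ k y = (m : ℝ) * (σ k x + σ k y) := by ring
    _ < 0 := mul_neg_of_pos_of_neg hmpos hsum
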